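/- Let Ω = (0,1)×(0,1) and let u ∈ C²(Ω̄) satisfy −Δu(x,y) = f(x,y) for all (x,y) ∈ Ω and u = 0 on ∂Ω, where f is continuous on Ω̄. Let Γ = {(x,y) ∈ Ω : x = y} be the diagonal of the square. Then ∫_Γ u ds = (1/√2) ∫_Ω f(x,y)·G(x,y) dx dy, where the line integral over Γ equals √2·∫₀¹ u(t,t) dt. -/

import Mathlib

open MeasureTheory

/-- The Green function of `-u'' = f` on `(0,1)`, viewed as a function of two variables
on the unit square: `G(x,y) = y(1-x)` if `y ≤ x` and `G(x,y) = x(1-y)` if `x < y`. -/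
noncomputable def greenFn (a s : ℝ) : ℝ :=
  if s ≤ a then s * (1 - a) else a * (1 - s)

/-- The Laplacian of a function on `ℝ²`, written via iterated (Fréchet) derivatives:
`Δu(p) = ∂²u/∂x²(p) + ∂²u/∂y²(p)`. -/
noncomputable def lap2 (u : ℝ × ℝ → ℝ) (p : ℝ × ℝ) : ℝ :=
  fderiv ℝ (fun q => fderiv ℝ u q ((1:ℝ), (0:ℝ))) p ((1:ℝ), (0:ℝ)) +
  fderiv ℝ (fun q => fderiv ℝ u q ((0:ℝ), (1:ℝ))) p ((0:ℝ), (1:ℝ))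

open Set

lemma greenFn_eq_min (a b : ℝ) : greenFn a b = min (b * (1 - a)) (a * (1 - b)) := by
  unfold greenFn
  rcases le_or_gt b a with h | h
  · rw [if_pos h, eq_comm, min_eq_left]; nlinarith
  · rw [if_neg (not_le.mpr h), eq_comm, min_eq_right]; nlinarith

lemma greenFn_symm (a b : ℝ) : greenFn a b = greenFn b a := by
  rw [greenFn_eq_min, greenFn_eq_min, min_comm]

lemma greenFn_cont : Continuous (fun p : ℝ × ℝ => greenFn p.1 p.2) := by
  simp only [greenFn_eq_min]; fun_prop

lemma key1D (v vd vdd : ℝ → ℝ) (a : ℝ) (ha : a ∈ Set.Ioo (0:ℝ) 1)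
    (hv : ContinuousOn v (Set.Icc 0 1)) (hvd : ContinuousOn vd (Set.Icc 0 1))
    (hvdd : ContinuousOn vdd (Set.Icc 0 1))
    (hd1 : ∀ b ∈ Set.Ioo (0:ℝ) 1, HasDerivAt v (vd b) b)
    (hd2 : ∀ b ∈ Set.Ioo (0:ℝ) 1, HasDerivAt vd (vdd b) b)
    (h0 : v 0 = 0) (h1 : v 1 = 0) :
    ∫ b in (0:ℝ)..1, -vdd b * greenFn a b = v a := by
  obtain ⟨ha0, ha1⟩ := ha
  have hsub1 : Icc (0:ℝ) a ⊆ Icc 0 1 := Icc_subset_Icc le_rfl ha1.le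
  have hsub2 : Icc a (1:ℝ) ⊆ Icc 0 1 := Icc_subset_Icc ha0.le le_rfl
  have hgb : Continuous (fun b : ℝ => greenFn a b) :=
    greenFn_cont.comp (continuous_const.prodMk continuous_id)
  have hint : ∀ c d : ℝ, c ≤ d → Icc c d ⊆ Icc 0 1 →
      IntervalIntegrable (fun b => -vdd b * greenFn a b) volume c d := by
    intro c d hcd hsub
    apply ContinuousOn.intervalIntegrable
    rw [uIcc_of_le hcd]
    exact ((hvdd.mono hsub).neg).mul hgb.continuousOn
  have hI1 : ∫ b in (0:ℝ)..a, -vdd b * greenFn a b = (1-a) * (v a - a * vd a) := by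
    have e1 : ∀ b ∈ uIcc (0:ℝ) a, -vdd b * greenFn a b = -vdd b * (b * (1-a)) := by
      intro b hb
      rw [uIcc_of_le ha0.le] at hb
      rw [greenFn, if_pos hb.2]
    rw [intervalIntegral.integral_congr e1]
    have hftc := intervalIntegral.integral_eq_sub_of_hasDeriv_right_of_le ha0.le
        (f := fun b => (1-a) * (v b - b * vd b)) (f' := fun b => -vdd b * (b * (1-a)))
        (continuousOn_const.mul ((hv.mono hsub1).sub (continuousOn_id.mul (hvd.mono hsub1))))
        ?_ ?_
    · rw [hftc]; simp only [h0]; ring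
    · intro x hx
      have hx1 : x ∈ Ioo (0:ℝ) 1 := ⟨hx.1, hx.2.trans ha1⟩
      have hda : HasDerivAt (fun b => (1-a) * (v b - b * vd b))
          ((1-a) * (vd x - (1 * vd x + x * vdd x))) x :=
        ((hd1 x hx1).sub ((hasDerivAt_id x).mul (hd2 x hx1))).const_mul (1-a)
      have : (1-a) * (vd x - (1 * vd x + x * vdd x)) = -vdd x * (x * (1-a)) := by ring
      rw [this] at hda
      exact hda.hasDerivWithinAt
    · apply ContinuousOn.intervalIntegrable
      rw [uIcc_of_le ha0.le]
      exact ((hvdd.mono hsub1).neg).mul (continuousOn_id.mul continuousOn_const)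
  have hI2 : ∫ b in a..(1:ℝ), -vdd b * greenFn a b = a * ((1-a) * vd a + v a) := by
    have e2 : ∀ b ∈ uIcc a (1:ℝ), -vdd b * greenFn a b = -vdd b * (a * (1-b)) := by
      intro b hb
      rw [uIcc_of_le ha1.le] at hb
      rw [greenFn]
      split_ifs with h
      · have : b = a := le_antisymm h hb.1
        subst this; ring_nf
      · rfl
    rw [intervalIntegral.integral_congr e2]
    have hftc := intervalIntegral.integral_eq_sub_of_hasDeriv_right_of_le ha1.le
        (f := fun b => -(a * ((1-b) * vd b + v b))) (f' := fun b => -vdd b * (a * (1-b)))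
        (((continuousOn_const.mul (((continuousOn_const.sub continuousOn_id).mul
          (hvd.mono hsub2)).add (hv.mono hsub2)))).neg)
        ?_ ?_
    · rw [hftc]; simp only [h1]; ring
    · intro x hx
      have hx1 : x ∈ Ioo (0:ℝ) 1 := ⟨ha0.trans hx.1, hx.2⟩
      have hda : HasDerivAt (fun b => -(a * ((1-b) * vd b + v b)))
          (-(a * (((0-1) * vd x + (1-x) * vdd x) + vd x))) x :=
        ((((((hasDerivAt_const x (1:ℝ)).sub (hasDerivAt_id x)).mul (hd2 x hx1)).add
          (hd1 x hx1))).const_mul a).neg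
      have : -(a * (((0-1) * vd x + (1-x) * vdd x) + vd x)) = -vdd x * (a * (1-x)) := by ring
      rw [this] at hda
      exact hda.hasDerivWithinAt
    · apply ContinuousOn.intervalIntegrable
      rw [uIcc_of_le ha1.le]
      exact ((hvdd.mono hsub2).neg).mul (continuousOn_const.mul
        (continuousOn_const.sub continuousOn_id))
  rw [← intervalIntegral.integral_add_adjacent_intervals (hint 0 a ha0.le hsub1)
    (hint a 1 ha1.le hsub2), hI1, hI2]
  ring

theorem stmt11
    (u f : ℝ × ℝ → ℝ)
    (hu : ContDiffOn ℝ 2 u (Set.Icc (0:ℝ) 1 ×ˢ Set.Icc (0:ℝ) 1))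
    (hf : ContinuousOn f (Set.Icc (0:ℝ) 1 ×ˢ Set.Icc (0:ℝ) 1))
    (hpde : ∀ p ∈ Set.Ioo (0:ℝ) 1 ×ˢ Set.Ioo (0:ℝ) 1, -lap2 u p = f p)
    (hbc : ∀ p ∈ frontier (Set.Ioo (0:ℝ) 1 ×ˢ Set.Ioo (0:ℝ) 1), u p = 0) :
    Real.sqrt 2 * ∫ t in (0:ℝ)..1, u (t, t) =
      (1 / Real.sqrt 2) *
        ∫ a in (0:ℝ)..1, ∫ b in (0:ℝ)..1, f (a, b) * greenFn a b := by
  have h01 : (0:ℝ) ≤ 1 := zero_le_one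
  set S : Set (ℝ × ℝ) := Set.Icc (0:ℝ) 1 ×ˢ Set.Icc (0:ℝ) 1 with hSdef
  set O : Set (ℝ × ℝ) := Set.Ioo (0:ℝ) 1 ×ˢ Set.Ioo (0:ℝ) 1 with hOdef
  have hO_open : IsOpen O := isOpen_Ioo.prod isOpen_Ioo
  have hOS : O ⊆ S := Set.prod_mono Set.Ioo_subset_Icc_self Set.Ioo_subset_Icc_self
  have hSu : UniqueDiffOn ℝ S := (uniqueDiffOn_Icc one_pos).prod (uniqueDiffOn_Icc one_pos)
  have hSnhds : ∀ p ∈ O, S ∈ nhds p := fun p hp =>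
    Filter.mem_of_superset (hO_open.mem_nhds hp) hOS
  have hfr : frontier O = S \ O := by
    rw [frontier, hO_open.interior_eq, hOdef, hSdef, closure_prod_eq,
      closure_Ioo one_ne_zero.symm]
  -- boundary zeros
  have hmemS : ∀ s t : ℝ, s ∈ Icc (0:ℝ) 1 → t ∈ Icc (0:ℝ) 1 → ((s, t) : ℝ × ℝ) ∈ S :=
    fun s t hs ht => Set.mk_mem_prod hs ht
  have h0Icc : (0:ℝ) ∈ Icc (0:ℝ) 1 := by norm_num
  have h1Icc : (1:ℝ) ∈ Icc (0:ℝ) 1 := by norm_num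
  have hu0 : ∀ t ∈ Set.Icc (0:ℝ) 1, u (t, 0) = 0 := by
    intro t ht
    exact hbc _ (hfr ▸ ⟨hmemS t 0 ht h0Icc, fun h => lt_irrefl 0 h.2.1⟩)
  have hu1 : ∀ t ∈ Set.Icc (0:ℝ) 1, u (t, 1) = 0 := by
    intro t ht
    exact hbc _ (hfr ▸ ⟨hmemS t 1 ht h1Icc, fun h => lt_irrefl 1 h.2.2⟩)
  have h0u : ∀ t ∈ Set.Icc (0:ℝ) 1, u (0, t) = 0 := by
    intro t ht
    exact hbc _ (hfr ▸ ⟨hmemS 0 t h0Icc ht, fun h => lt_irrefl 0 h.1.1⟩)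
  have h1u : ∀ t ∈ Set.Icc (0:ℝ) 1, u (1, t) = 0 := by
    intro t ht
    exact hbc _ (hfr ▸ ⟨hmemS 1 t h1Icc ht, fun h => lt_irrefl 1 h.1.2⟩)
  -- derivatives
  set D := fderivWithin ℝ u S with hDdef
  have hD1 : ContDiffOn ℝ 1 D S := hu.fderivWithin hSu (by norm_num)
  have hA : ∀ e : ℝ × ℝ, ContDiffOn ℝ 1 (fun p => D p e) S :=
    fun e => hD1.clm_apply contDiffOn_const
  have hAc : ∀ e : ℝ × ℝ, ContinuousOn (fun p => D p e) S := fun e => (hA e).continuousOn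
  have hBc : ∀ e : ℝ × ℝ,
      ContinuousOn (fun p => fderivWithin ℝ (fun q => D q e) S p e) S :=
    fun e => ((hA e).continuousOn_fderivWithin hSu le_rfl).clm_apply continuousOn_const
  have hfd : ∀ p ∈ O, D p = fderiv ℝ u p := fun p hp =>
    fderivWithin_of_mem_nhds (hSnhds p hp)
  have hdiffA : ∀ e : ℝ × ℝ, ∀ p ∈ O, DifferentiableAt ℝ (fun q => D q e) p :=
    fun e p hp => ((hA e).contDiffAt (hSnhds p hp)).differentiableAt one_ne_zero
  have hBfd : ∀ e : ℝ × ℝ, ∀ p ∈ O,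
      fderivWithin ℝ (fun q => D q e) S p = fderiv ℝ (fun q => fderiv ℝ u q e) p := by
    intro e p hp
    rw [fderivWithin_of_mem_nhds (hSnhds p hp)]
    apply Filter.EventuallyEq.fderiv_eq
    filter_upwards [hO_open.mem_nhds hp] with q hq
    rw [hfd q hq]
  set E1 : ℝ × ℝ → ℝ := fun p => fderivWithin ℝ (fun q => D q ((1:ℝ), (0:ℝ))) S p ((1:ℝ), (0:ℝ))
    with hE1def
  set E2 : ℝ × ℝ → ℝ := fun p => fderivWithin ℝ (fun q => D q ((0:ℝ), (1:ℝ))) S p ((0:ℝ), (1:ℝ))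
    with hE2def
  have hlap : ∀ p ∈ O, f p = -E1 p + -E2 p := by
    intro p hp
    rw [← hpde p hp, lap2, hE1def, hE2def]
    simp only
    rw [hBfd ((1:ℝ), (0:ℝ)) p hp, hBfd ((0:ℝ), (1:ℝ)) p hp]
    ring
  -- slice derivatives
  have hv1 : ∀ a ∈ Set.Ioo (0:ℝ) 1, ∀ b ∈ Set.Ioo (0:ℝ) 1,
      HasDerivAt (fun t => u (a, t)) (D (a, b) ((0:ℝ), (1:ℝ))) b := by
    intro a ha b hb
    have hp : ((a : ℝ), b) ∈ O := Set.mk_mem_prod ha hb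
    have hdu : DifferentiableAt ℝ u (a, b) :=
      (hu.contDiffAt (hSnhds _ hp)).differentiableAt (by norm_num)
    have hline : HasDerivAt (fun t : ℝ => ((a : ℝ), t)) ((0:ℝ), (1:ℝ)) b :=
      (hasDerivAt_const b a).prodMk (hasDerivAt_id b)
    have h := hdu.hasFDerivAt.comp_hasDerivAt b hline
    rw [hfd _ hp]
    exact h
  have hv2 : ∀ a ∈ Set.Ioo (0:ℝ) 1, ∀ b ∈ Set.Ioo (0:ℝ) 1,
      HasDerivAt (fun t => D (a, t) ((0:ℝ), (1:ℝ))) (E2 (a, b)) b := by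
    intro a ha b hb
    have hp : ((a : ℝ), b) ∈ O := Set.mk_mem_prod ha hb
    have hdg : DifferentiableAt ℝ (fun q => D q ((0:ℝ), (1:ℝ))) (a, b) :=
      hdiffA _ _ hp
    have hline : HasDerivAt (fun t : ℝ => ((a : ℝ), t)) ((0:ℝ), (1:ℝ)) b :=
      (hasDerivAt_const b a).prodMk (hasDerivAt_id b)
    have h := hdg.hasFDerivAt.comp_hasDerivAt b hline
    have he : E2 (a, b) = fderiv ℝ (fun q => D q ((0:ℝ), (1:ℝ))) (a, b) ((0:ℝ), (1:ℝ)) := by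
      rw [hE2def]
      simp only
      rw [fderivWithin_of_mem_nhds (hSnhds _ hp)]
    rw [he]
    exact h
  have hh1 : ∀ b ∈ Set.Ioo (0:ℝ) 1, ∀ a ∈ Set.Ioo (0:ℝ) 1,
      HasDerivAt (fun t => u (t, b)) (D (a, b) ((1:ℝ), (0:ℝ))) a := by
    intro b hb a ha
    have hp : ((a : ℝ), b) ∈ O := Set.mk_mem_prod ha hb
    have hdu : DifferentiableAt ℝ u (a, b) :=
      (hu.contDiffAt (hSnhds _ hp)).differentiableAt (by norm_num)
    have hline : HasDerivAt (fun t : ℝ => (t, (b : ℝ))) ((1:ℝ), (0:ℝ)) a :=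
      (hasDerivAt_id a).prodMk (hasDerivAt_const a b)
    have h := hdu.hasFDerivAt.comp_hasDerivAt a hline
    rw [hfd _ hp]
    exact h
  have hh2 : ∀ b ∈ Set.Ioo (0:ℝ) 1, ∀ a ∈ Set.Ioo (0:ℝ) 1,
      HasDerivAt (fun t => D (t, b) ((1:ℝ), (0:ℝ))) (E1 (a, b)) a := by
    intro b hb a ha
    have hp : ((a : ℝ), b) ∈ O := Set.mk_mem_prod ha hb
    have hdg : DifferentiableAt ℝ (fun q => D q ((1:ℝ), (0:ℝ))) (a, b) :=
      hdiffA _ _ hp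
    have hline : HasDerivAt (fun t : ℝ => (t, (b : ℝ))) ((1:ℝ), (0:ℝ)) a :=
      (hasDerivAt_id a).prodMk (hasDerivAt_const a b)
    have h := hdg.hasFDerivAt.comp_hasDerivAt a hline
    have he : E1 (a, b) = fderiv ℝ (fun q => D q ((1:ℝ), (0:ℝ))) (a, b) ((1:ℝ), (0:ℝ)) := by
      rw [hE1def]
      simp only
      rw [fderivWithin_of_mem_nhds (hSnhds _ hp)]
    rw [he]
    exact h
    -- continuity and integrability
  have hE1c : ContinuousOn E1 S := hBc _
  have hE2c : ContinuousOn E2 S := hBc _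
  have hw1cont : ContinuousOn (fun p : ℝ × ℝ => -E1 p * greenFn p.1 p.2) S :=
    hE1c.neg.mul greenFn_cont.continuousOn
  have hw2cont : ContinuousOn (fun p : ℝ × ℝ => -E2 p * greenFn p.1 p.2) S :=
    hE2c.neg.mul greenFn_cont.continuousOn
  have hScompact : IsCompact S := isCompact_Icc.prod isCompact_Icc
  have hw1int : Integrable (fun p : ℝ × ℝ => -E1 p * greenFn p.1 p.2)
      ((volume.restrict (Set.Ioc (0:ℝ) 1)).prod (volume.restrict (Set.Ioc (0:ℝ) 1))) := by
    rw [Measure.prod_restrict, ← Measure.volume_eq_prod]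
    exact (hw1cont.integrableOn_compact hScompact).mono_set
      (Set.prod_mono Set.Ioc_subset_Icc_self Set.Ioc_subset_Icc_self)
  have hInner2 : ∀ a ∈ Set.Ioo (0:ℝ) 1,
      (∫ b in (0:ℝ)..1, -E2 (a, b) * greenFn a b) = u (a, a) := by
    intro a ha
    have haI : a ∈ Icc (0:ℝ) 1 := Ioo_subset_Icc_self ha
    have hmap : MapsTo (fun t : ℝ => ((a:ℝ), t)) (Icc 0 1) S := fun t ht => hmemS a t haI ht
    have hcontline : Continuous (fun t : ℝ => ((a:ℝ), t)) := by fun_prop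
    exact key1D (fun t => u (a, t)) (fun t => D (a, t) ((0:ℝ),(1:ℝ))) (fun t => E2 (a, t)) a ha
      (hu.continuousOn.comp hcontline.continuousOn hmap)
      ((hAc ((0:ℝ),(1:ℝ))).comp hcontline.continuousOn hmap)
      (hE2c.comp hcontline.continuousOn hmap)
      (fun b hb => hv1 a ha b hb) (fun b hb => hv2 a ha b hb)
      (hu0 a haI) (hu1 a haI)
  have hInnerH : ∀ b ∈ Set.Ioo (0:ℝ) 1,
      (∫ a in (0:ℝ)..1, -E1 (a, b) * greenFn a b) = u (b, b) := by
    intro b hb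
    have hbI : b ∈ Icc (0:ℝ) 1 := Ioo_subset_Icc_self hb
    have hmap : MapsTo (fun t : ℝ => (t, (b:ℝ))) (Icc 0 1) S := fun t ht => hmemS t b ht hbI
    have hcontline : Continuous (fun t : ℝ => (t, (b:ℝ))) := by fun_prop
    have hk := key1D (fun t => u (t, b)) (fun t => D (t, b) ((1:ℝ),(0:ℝ)))
      (fun t => E1 (t, b)) b hb
      (hu.continuousOn.comp hcontline.continuousOn hmap)
      ((hAc ((1:ℝ),(0:ℝ))).comp hcontline.continuousOn hmap)
      (hE1c.comp hcontline.continuousOn hmap)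
      (fun a ha => hh1 b hb a ha) (fun a ha => hh2 b hb a ha)
      (h0u b hbI) (h1u b hbI)
    calc ∫ a in (0:ℝ)..1, -E1 (a, b) * greenFn a b
        = ∫ a in (0:ℝ)..1, -E1 (a, b) * greenFn b a :=
          intervalIntegral.integral_congr (fun t _ => by rw [greenFn_symm])
      _ = u (b, b) := hk
  have hintline : ∀ a ∈ Icc (0:ℝ) 1, ∀ w : ℝ × ℝ → ℝ, ContinuousOn w S →
      IntervalIntegrable (fun b => w (a, b)) volume 0 1 := by
    intro a ha w hw
    apply ContinuousOn.intervalIntegrable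
    rw [uIcc_of_le h01]
    exact hw.comp (by fun_prop : Continuous fun t : ℝ => ((a:ℝ), t)).continuousOn
      (fun t ht => hmemS a t ha ht)
  have hsplit : ∀ a ∈ Set.Ioo (0:ℝ) 1,
      (∫ b in (0:ℝ)..1, f (a, b) * greenFn a b)
        = u (a, a) + ∫ b in (0:ℝ)..1, -E1 (a, b) * greenFn a b := by
    intro a ha
    have haI : a ∈ Icc (0:ℝ) 1 := Ioo_subset_Icc_self ha
    have hcong : (∫ b in (0:ℝ)..1, f (a, b) * greenFn a b)
        = ∫ b in (0:ℝ)..1, (-E2 (a, b) * greenFn a b + -E1 (a, b) * greenFn a b) := by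
      rw [intervalIntegral.integral_of_le h01, intervalIntegral.integral_of_le h01,
        integral_Ioc_eq_integral_Ioo, integral_Ioc_eq_integral_Ioo]
      apply setIntegral_congr_fun measurableSet_Ioo
      intro b hb
      show f (a, b) * greenFn a b = -E2 (a, b) * greenFn a b + -E1 (a, b) * greenFn a b
      rw [hlap (a, b) (Set.mk_mem_prod ha hb)]
      ring
    rw [hcong, intervalIntegral.integral_add
      (hintline a haI _ hw2cont) (hintline a haI _ hw1cont), hInner2 a ha]
  have hswap : (∫ a in (0:ℝ)..1, ∫ b in (0:ℝ)..1, -E1 (a, b) * greenFn a b)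
      = ∫ b in (0:ℝ)..1, ∫ a in (0:ℝ)..1, -E1 (a, b) * greenFn a b := by
    rw [intervalIntegral.integral_of_le h01, intervalIntegral.integral_of_le h01]
    simp_rw [intervalIntegral.integral_of_le h01]
    exact MeasureTheory.integral_integral_swap hw1int
  have hlast : (∫ b in (0:ℝ)..1, ∫ a in (0:ℝ)..1, -E1 (a, b) * greenFn a b)
      = ∫ t in (0:ℝ)..1, u (t, t) := by
    rw [intervalIntegral.integral_of_le h01, integral_Ioc_eq_integral_Ioo]
    rw [show (∫ t in (0:ℝ)..1, u (t, t)) = ∫ t in Ioo (0:ℝ) 1, u (t, t) by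
      rw [intervalIntegral.integral_of_le h01, integral_Ioc_eq_integral_Ioo]]
    exact setIntegral_congr_fun measurableSet_Ioo (fun b hb => hInnerH b hb)
  have hdiagint : IntervalIntegrable (fun t : ℝ => u (t, t)) volume 0 1 := by
    apply ContinuousOn.intervalIntegrable
    rw [uIcc_of_le h01]
    exact hu.continuousOn.comp (by fun_prop : Continuous fun t : ℝ => (t, t)).continuousOn
      (fun t ht => hmemS t t ht ht)
  have hg2int : IntervalIntegrable
      (fun a => ∫ b in (0:ℝ)..1, -E1 (a, b) * greenFn a b) volume 0 1 := by
    rw [intervalIntegrable_iff_integrableOn_Ioc_of_le h01]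
    have h := hw1int.integral_prod_left
    simp_rw [intervalIntegral.integral_of_le h01]
    exact h
  have hmain : (∫ a in (0:ℝ)..1, ∫ b in (0:ℝ)..1, f (a, b) * greenFn a b)
      = 2 * ∫ t in (0:ℝ)..1, u (t, t) := by
    have houter : (∫ a in (0:ℝ)..1, ∫ b in (0:ℝ)..1, f (a, b) * greenFn a b)
        = ∫ a in (0:ℝ)..1, (u (a, a) + ∫ b in (0:ℝ)..1, -E1 (a, b) * greenFn a b) := by
      rw [intervalIntegral.integral_of_le h01, intervalIntegral.integral_of_le h01,
        integral_Ioc_eq_integral_Ioo, integral_Ioc_eq_integral_Ioo]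
      exact setIntegral_congr_fun measurableSet_Ioo (fun a ha => hsplit a ha)
    rw [houter, intervalIntegral.integral_add hdiagint hg2int, hswap, hlast]
    ring
  rw [hmain]
  have hs2 : Real.sqrt 2 * Real.sqrt 2 = 2 := Real.mul_self_sqrt (by norm_num)
  have hne : Real.sqrt 2 ≠ 0 := by positivity
  field_simp
  linear_combination (∫ t in (0:ℝ)..1, u (t, t)) * hs2
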